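/- Let T ⊆ [3k] × 𝒞 be a partial schedule and ν, ξ : 𝒞 → ℕ profiles with disjoint supports (no C ∈ 𝒞 has both ν(C) > 0 and ξ(C) > 0) and |T| + ‖ν‖ + ‖ξ‖ ≤ k/2. Then Σ_{A ∈ ℱ(T,ν)} Σ_{B ∈ ℱ(T,ξ)} Ẽ_T(A ∪ B) = (Σ_{A ∈ ℱ(T,ν)} Ẽ_T(A)) · (Σ_{B ∈ ℱ(T,ξ)} Ẽ_T(B)), where Ẽ_T(A ∪ B) = 0 whenever A ∪ B is not a partial schedule. -/

import Mathlib

noncomputable section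
open scoped Classical

/-- `S` is a partial schedule: every machine occurs in at most one pair of `S`. -/
def IsPartialSchedule {m : ℕ} {C : Type*} (S : Finset (Fin m × C)) : Prop :=
  ∀ p ∈ S, ∀ q ∈ S, p.1 = q.1 → p = q

/-- `δ_S(c)`: the number of machines that `S` connects to configuration `c`. -/
def deltaS {m : ℕ} {C : Type*} [DecidableEq C] (S : Finset (Fin m × C)) (c : C) : ℕ :=
  (S.filter fun e => e.2 = c).card

/-- The machine set `ℳ(S)` of `S`. -/
def machSet {m : ℕ} {C : Type*} (S : Finset (Fin m × C)) : Finset (Fin m) :=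
  S.image Prod.fst

/-- Falling factorial `(x)_b = x(x−1)⋯(x−b+1)`, with `(x)_0 = 1`. -/
def ffall : ℝ → ℕ → ℝ
  | _, 0 => 1
  | x, n + 1 => x * ffall (x - 1) n

/-- The conditional pseudoexpectation value
`Ẽ_T(S) = (1/(3k − |T|)_{|S|}) · ∏_{j=1}^{6} (k/2 − δ_T(C_j))_{δ_S(C_j)}`
if `S` is a partial schedule, and `0` otherwise. -/
def pexp (k : ℕ) (T S : Finset (Fin (3 * k) × Fin 6)) : ℝ :=
  if IsPartialSchedule S then
    (ffall ((3 * k : ℝ) - T.card) S.card)⁻¹ *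
      ∏ j : Fin 6, ffall ((k : ℝ) / 2 - deltaS T j) (deltaS S j)
  else 0

/-- A profile `γ : 𝒞 → ℕ` has norm `‖γ‖ = Σ_C γ(C)`. -/
def pnorm (γ : Fin 6 → ℕ) : ℕ := ∑ c : Fin 6, γ c

/-- `ℱ(T,γ)`: partial schedules `A` with `ℳ(A) ⊆ [m] ∖ ℳ(T)` in `γ`-profile. -/
def extFam (k : ℕ) (T : Finset (Fin (3 * k) × Fin 6)) (γ : Fin 6 → ℕ) :
    Finset (Finset (Fin (3 * k) × Fin 6)) :=
  Finset.univ.filter fun A =>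
    IsPartialSchedule A ∧ Disjoint (machSet A) (machSet T) ∧ ∀ c, deltaS A c = γ c

lemma ffall_zero (x : ℝ) : ffall x 0 = 1 := rfl

lemma ffall_succ (x : ℝ) (n : ℕ) : ffall x (n+1) = x * ffall (x-1) n := rfl

lemma ffall_succ_right (x : ℝ) (n : ℕ) : ffall x (n+1) = ffall x n * (x - n) := by
  induction n generalizing x with
  | zero => simp [ffall]
  | succ n ih =>
    rw [ffall_succ, ih (x-1), ffall_succ]
    push_cast; ring

lemma ffall_add (x : ℝ) (a b : ℕ) : ffall x (a + b) = ffall x a * ffall (x - a) b := by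
  induction b with
  | zero => simp [ffall]
  | succ b ih =>
    have h : a + (b + 1) = (a + b) + 1 := by ring
    rw [h, ffall_succ_right, ih, ffall_succ_right]
    push_cast; ring

lemma ffall_pos (x : ℝ) (n : ℕ) (h : (n : ℝ) - 1 < x) : 0 < ffall x n := by
  induction n generalizing x with
  | zero => norm_num [ffall]
  | succ n ih =>
    rw [ffall_succ]
    have hn : (0:ℝ) ≤ n := Nat.cast_nonneg n
    push_cast at h
    have hx : 0 < x := by linarith
    exact mul_pos hx (ih (x-1) (by push_cast; linarith))

lemma machSet_card {m : ℕ} {C : Type*} (S : Finset (Fin m × C))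
    (hS : IsPartialSchedule S) : (machSet S).card = S.card := by
  apply Finset.card_image_of_injOn
  intro p hp q hq hpq
  exact hS p hp q hq hpq

lemma mem_machSet {m : ℕ} {C : Type*} {S : Finset (Fin m × C)} {i : Fin m} :
    i ∈ machSet S ↔ ∃ c, (i, c) ∈ S := by
  simp only [machSet, Finset.mem_image]
  constructor
  · rintro ⟨⟨a, c⟩, hp, rfl⟩; exact ⟨c, hp⟩
  · rintro ⟨c, hc⟩; exact ⟨(i, c), hc, rfl⟩

lemma isPS_union {m : ℕ} {C : Type*} [DecidableEq C] {A B : Finset (Fin m × C)}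
    (hA : IsPartialSchedule A) (hB : IsPartialSchedule B)
    (hd : Disjoint (machSet A) (machSet B)) : IsPartialSchedule (A ∪ B) := by
  intro p hp q hq hpq
  rw [Finset.mem_union] at hp hq
  have hmem : ∀ r ∈ A, r.1 ∈ machSet A := fun r hr => mem_machSet.2 ⟨r.2, by simpa using hr⟩
  have hmem' : ∀ r ∈ B, r.1 ∈ machSet B := fun r hr => mem_machSet.2 ⟨r.2, by simpa using hr⟩
  rcases hp with hp | hp <;> rcases hq with hq | hq
  · exact hA p hp q hq hpq
  · exact absurd (hd.forall_ne_finset (hmem p hp) (hmem' q hq)) (by simp [hpq])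
  · exact absurd (hd.forall_ne_finset (hmem q hq) (hmem' p hp)) (by simp [hpq])
  · exact hB p hp q hq hpq

lemma deltaS_union {m : ℕ} {C : Type*} [DecidableEq C] {A B : Finset (Fin m × C)}
    (hd : Disjoint A B) (c : C) : deltaS (A ∪ B) c = deltaS A c + deltaS B c := by
  unfold deltaS
  rw [Finset.filter_union, Finset.card_union_of_disjoint]
  exact Finset.disjoint_filter_filter hd

lemma card_eq_sum_deltaS {m : ℕ} {C : Type*} [Fintype C] [DecidableEq C]
    (S : Finset (Fin m × C)) : S.card = ∑ c : C, deltaS S c := by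
  exact Finset.card_eq_sum_card_fiberwise (fun e _ => Finset.mem_univ e.2)

lemma isPS_subset {m : ℕ} {C : Type*} {A B : Finset (Fin m × C)}
    (h : A ⊆ B) (hB : IsPartialSchedule B) : IsPartialSchedule A :=
  fun p hp q hq hpq => hB p (h hp) q (h hq) hpq

lemma mem_extFam {k : ℕ} {T : Finset (Fin (3 * k) × Fin 6)} {γ : Fin 6 → ℕ}
    {A : Finset (Fin (3 * k) × Fin 6)} :
    A ∈ extFam k T γ ↔
      IsPartialSchedule A ∧ Disjoint (machSet A) (machSet T) ∧ ∀ c, deltaS A c = γ c := by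
  simp [extFam]

lemma card_of_mem_extFam {k : ℕ} {T : Finset (Fin (3 * k) × Fin 6)} {γ : Fin 6 → ℕ}
    {A : Finset (Fin (3 * k) × Fin 6)} (h : A ∈ extFam k T γ) : A.card = pnorm γ := by
  rw [card_eq_sum_deltaS]
  exact Finset.sum_congr rfl fun c _ => (mem_extFam.1 h).2.2 c

lemma fst_mem_machSet {m : ℕ} {C : Type*} {S : Finset (Fin m × C)} {p : Fin m × C}
    (h : p ∈ S) : p.1 ∈ machSet S := Finset.mem_image_of_mem _ h

lemma extFam_card (k : ℕ) : ∀ (n : ℕ) (γ : Fin 6 → ℕ), pnorm γ = n →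
    ∀ T : Finset (Fin (3 * k) × Fin 6), IsPartialSchedule T →
    ((extFam k T γ).card : ℝ) * ∏ c : Fin 6, ((γ c).factorial : ℝ)
      = ffall ((3 * k : ℝ) - T.card) n := by
  intro n
  induction n with
  | zero =>
    intro γ hγ T hT
    have hγ0 : ∀ c, γ c = 0 := fun c => Finset.sum_eq_zero_iff.1 hγ c (Finset.mem_univ c)
    have hsingle : extFam k T γ = {∅} := by
      ext A
      simp only [mem_extFam, Finset.mem_singleton]
      constructor
      · rintro ⟨hA, -, hδ⟩
        have : A.card = 0 := by
          rw [card_eq_sum_deltaS]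
          exact Finset.sum_eq_zero fun c _ => (hδ c).trans (hγ0 c)
        exact Finset.card_eq_zero.1 this
      · rintro rfl
        refine ⟨fun p hp => absurd hp (Finset.notMem_empty p), by simp [machSet], fun c => ?_⟩
        simp [deltaS, hγ0 c]
    simp [hsingle, hγ0, ffall]
  | succ n ih =>
    intro γ hγ T hT
    obtain ⟨c, hc⟩ : ∃ c, 0 < γ c := by
      by_contra h
      push_neg at h
      have : pnorm γ = 0 := Finset.sum_eq_zero fun c _ => Nat.le_zero.1 (h c)
      omega
    set γ' : Fin 6 → ℕ := Function.update γ c (γ c - 1) with hγ'def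
    have hγ'c : γ' c = γ c - 1 := Function.update_self c (γ c - 1) γ
    have hγ'ne : ∀ c', c' ≠ c → γ' c' = γ c' := fun c' h => Function.update_of_ne h _ _
    have hsum_erase : ∑ x ∈ Finset.univ.erase c, γ' x = ∑ x ∈ Finset.univ.erase c, γ x :=
      Finset.sum_congr rfl fun x hx => hγ'ne x (Finset.mem_erase.1 hx).1
    have hγ'n : pnorm γ' = n := by
      have h1 : pnorm γ = γ c + ∑ x ∈ Finset.univ.erase c, γ x :=
        (Finset.add_sum_erase _ γ (Finset.mem_univ c)).symm
      have h2 : pnorm γ' = γ' c + ∑ x ∈ Finset.univ.erase c, γ' x :=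
        (Finset.add_sum_erase _ γ' (Finset.mem_univ c)).symm
      rw [h2, hγ'c, hsum_erase]
      omega
    set E1 := (extFam k T γ).sigma (fun U => U.filter (fun e => e.2 = c)) with hE1
    set E2 := (extFam k T γ').sigma
      (fun U => (Finset.univ.filter (fun i : Fin (3 * k) => i ∉ machSet U ∧ i ∉ machSet T)))
      with hE2
    have hE1card : E1.card = (extFam k T γ).card * γ c := by
      rw [hE1, Finset.card_sigma]
      have h1 : ∀ U ∈ extFam k T γ, (U.filter (fun e => e.2 = c)).card = γ c :=
        fun U hU => (mem_extFam.1 hU).2.2 c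
      rw [Finset.sum_congr rfl h1, Finset.sum_const, smul_eq_mul]
    have hE2card : E2.card = (extFam k T γ').card * (3 * k - (n + T.card)) := by
      rw [hE2, Finset.card_sigma]
      have h1 : ∀ U ∈ extFam k T γ',
          (Finset.univ.filter (fun i : Fin (3 * k) => i ∉ machSet U ∧ i ∉ machSet T)).card
            = 3 * k - (n + T.card) := by
        intro U hU
        obtain ⟨hPS, hdisj, hδ⟩ := mem_extFam.1 hU
        have h2 : (Finset.univ.filter (fun i : Fin (3 * k) => i ∉ machSet U ∧ i ∉ machSet T))
            = (machSet U ∪ machSet T)ᶜ := by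
          ext i; simp [not_or]
        have h3 : U.card = n := by rw [card_of_mem_extFam hU, hγ'n]
        rw [h2, Finset.card_compl, Finset.card_union_of_disjoint hdisj,
          machSet_card U hPS, machSet_card T hT, h3]
        simp
      rw [Finset.sum_congr rfl h1, Finset.sum_const, smul_eq_mul]
    have hbij : E1.card = E2.card := by
      apply Finset.card_bij
        (fun p _ => (⟨p.1.erase p.2, p.2.1⟩ : Σ _ : Finset (Fin (3*k) × Fin 6), Fin (3*k)))
      · -- maps into E2
        rintro ⟨U, e⟩ hp
        rw [hE1, Finset.mem_sigma] at hp
        obtain ⟨hU, he⟩ := hp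
        replace hU : U ∈ extFam k T γ := hU
        replace he : e ∈ U.filter (fun e => e.2 = c) := he
        rw [Finset.mem_filter] at he
        obtain ⟨heU, hec⟩ := he
        obtain ⟨hPS, hdisj, hδ⟩ := mem_extFam.1 hU
        have he1machU : e.1 ∈ machSet U := fst_mem_machSet heU
        have he1T : e.1 ∉ machSet T := fun h => hdisj.forall_ne_finset he1machU h rfl
        have he1erase : e.1 ∉ machSet (U.erase e) := by
          intro h
          obtain ⟨c'', hc''⟩ := mem_machSet.1 h
          have hmem : (e.1, c'') ∈ U := Finset.mem_of_mem_erase hc''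
          have heq2 : (e.1, c'') = e := hPS _ hmem e heU rfl
          rw [heq2] at hc''
          exact (Finset.mem_erase.1 hc'').1 rfl
        rw [hE2, Finset.mem_sigma]
        constructor
        · show U.erase e ∈ extFam k T γ'
          rw [mem_extFam]
          refine ⟨isPS_subset (Finset.erase_subset _ _) hPS,
            Disjoint.mono_left (Finset.image_subset_image (Finset.erase_subset _ _)) hdisj, ?_⟩
          intro c'
          show ((U.erase e).filter (fun e => e.2 = c')).card = γ' c'
          rw [Finset.filter_erase]
          by_cases h : c' = c
          · subst h
            rw [Finset.card_erase_of_mem (Finset.mem_filter.2 ⟨heU, hec⟩), hγ'c]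
            have h4 : (U.filter (fun e => e.2 = c')).card = γ c' := hδ c'
            rw [h4]
          · rw [Finset.erase_eq_of_notMem, hγ'ne c' h]
            · exact hδ c'
            · intro hmem
              exact h ((Finset.mem_filter.1 hmem).2.symm.trans hec)
        · show e.1 ∈ Finset.univ.filter
            (fun i : Fin (3*k) => i ∉ machSet (U.erase e) ∧ i ∉ machSet T)
          simp only [Finset.mem_filter, Finset.mem_univ, true_and]
          exact ⟨he1erase, he1T⟩
      · -- injective
        rintro ⟨U₁, e₁⟩ h₁ ⟨U₂, e₂⟩ h₂ heqq
        rw [hE1, Finset.mem_sigma] at h₁ h₂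
        obtain ⟨hU₁, he₁⟩ := h₁
        obtain ⟨hU₂, he₂⟩ := h₂
        replace he₁ : e₁ ∈ U₁.filter (fun e => e.2 = c) := he₁
        replace he₂ : e₂ ∈ U₂.filter (fun e => e.2 = c) := he₂
        rw [Finset.mem_filter] at he₁ he₂
        obtain ⟨hUeq, h1eq⟩ := Sigma.mk.inj_iff.1 heqq
        rw [heq_eq_eq] at h1eq
        have heeq : e₁ = e₂ := Prod.ext h1eq (he₁.2.trans he₂.2.symm)
        subst heeq
        have hU12 : U₁ = U₂ := by
          rw [← Finset.insert_erase he₁.1, hUeq, Finset.insert_erase he₂.1]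
        rw [hU12]
      · -- surjective
        rintro ⟨U', i⟩ hq
        rw [hE2, Finset.mem_sigma] at hq
        obtain ⟨hU', hi⟩ := hq
        replace hU' : U' ∈ extFam k T γ' := hU'
        replace hi : i ∈ Finset.univ.filter
          (fun j : Fin (3*k) => j ∉ machSet U' ∧ j ∉ machSet T) := hi
        simp only [Finset.mem_filter, Finset.mem_univ, true_and] at hi
        obtain ⟨hiU', hiT⟩ := hi
        obtain ⟨hPS', hdisj', hδ'⟩ := mem_extFam.1 hU'
        have hnotmem : (i, c) ∉ U' := fun h => hiU' (fst_mem_machSet h)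
        refine ⟨⟨insert (i, c) U', (i, c)⟩, ?_, ?_⟩
        · rw [hE1, Finset.mem_sigma]
          constructor
          · show insert (i, c) U' ∈ extFam k T γ
            rw [mem_extFam]
            refine ⟨?_, ?_, ?_⟩
            · intro p hp q hq hpq
              rw [Finset.mem_insert] at hp hq
              rcases hp with rfl | hp <;> rcases hq with rfl | hq
              · rfl
              · exact absurd (hpq ▸ fst_mem_machSet hq : (i,c).1 ∈ machSet U') hiU'
              · exact absurd (fst_mem_machSet hp) (by rw [hpq]; exact hiU')
              · exact hPS' p hp q hq hpq
            · rw [machSet, Finset.image_insert, Finset.disjoint_insert_left]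
              exact ⟨hiT, hdisj'⟩
            · intro c'
              show ((insert (i,c) U').filter (fun e => e.2 = c')).card = γ c'
              rw [Finset.filter_insert]
              by_cases h : c' = c
              · subst h
                rw [if_pos rfl, Finset.card_insert_of_notMem (fun hmem =>
                    hnotmem (Finset.mem_filter.1 hmem).1)]
                have h4 : (U'.filter (fun e => e.2 = c')).card = γ' c' := hδ' c'
                rw [h4, hγ'c]
                omega
              · rw [if_neg (fun hh => h hh.symm), ← hγ'ne c' h]
                exact hδ' c'
          · show (i, c) ∈ (insert (i,c) U').filter (fun e => e.2 = c)
            exact Finset.mem_filter.2 ⟨Finset.mem_insert_self _ _, rfl⟩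
        · show (⟨(insert (i,c) U').erase (i,c), i⟩ :
              Σ _ : Finset (Fin (3*k) × Fin 6), Fin (3*k)) = ⟨U', i⟩
          rw [Finset.erase_insert hnotmem]
    have hnat : (extFam k T γ).card * γ c
        = (extFam k T γ').card * (3 * k - (n + T.card)) := by
      rw [← hE1card, hbij, hE2card]
    have hprodγ : (∏ c' : Fin 6, ((γ c').factorial : ℝ))
        = (γ c : ℝ) * ∏ c' : Fin 6, ((γ' c').factorial : ℝ) := by
      rw [← Finset.prod_erase_mul _ _ (Finset.mem_univ c),
        ← Finset.prod_erase_mul _ (fun c' => ((γ' c').factorial : ℝ)) (Finset.mem_univ c)]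
      have h1 : ∏ x ∈ Finset.univ.erase c, ((γ x).factorial : ℝ)
          = ∏ x ∈ Finset.univ.erase c, ((γ' x).factorial : ℝ) :=
        Finset.prod_congr rfl fun x hx => by rw [hγ'ne x (Finset.mem_erase.1 hx).1]
      have h2 : (γ c).factorial = γ c * (γ c - 1).factorial := by
        conv_lhs => rw [show γ c = (γ c - 1) + 1 from by omega]
        rw [Nat.factorial_succ, show γ c - 1 + 1 = γ c from by omega]
      rw [h1, hγ'c, h2]
      push_cast
      ring
    by_cases hne : (extFam k T γ').Nonempty
    · obtain ⟨U₀, hU₀⟩ := hne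
      obtain ⟨hPS₀, hdisj₀, -⟩ := mem_extFam.1 hU₀
      have hU₀card : U₀.card = n := by rw [card_of_mem_extFam hU₀, hγ'n]
      have hle : n + T.card ≤ 3 * k := by
        have h5 := Finset.card_le_univ (machSet U₀ ∪ machSet T)
        rw [Finset.card_union_of_disjoint hdisj₀, machSet_card U₀ hPS₀,
          machSet_card T hT, hU₀card] at h5
        simpa using h5
      have hcount : ((extFam k T γ).card : ℝ) * γ c
          = ((extFam k T γ').card : ℝ) * ((3 * k : ℝ) - T.card - n) := by
        have h := congrArg (Nat.cast : ℕ → ℝ) hnat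
        rw [Nat.cast_mul, Nat.cast_mul, Nat.cast_sub hle] at h
        push_cast at h
        linear_combination h
      rw [ffall_succ_right, ← ih γ' hγ'n T hT, hprodγ]
      push_cast
      linear_combination (∏ c' : Fin 6, ((γ' c').factorial : ℝ)) * hcount
    · rw [Finset.not_nonempty_iff_eq_empty] at hne
      have hnat0 : (extFam k T γ).card * γ c = 0 := by
        rw [hnat, hne]
        simp
      have hcard0 : (extFam k T γ).card = 0 := by
        rcases Nat.mul_eq_zero.1 hnat0 with h | h
        · exact h
        · omega
      have hffn : ffall ((3 * k : ℝ) - T.card) n = 0 := by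
        have h := ih γ' hγ'n T hT
        rw [hne] at h
        simpa using h.symm
      rw [ffall_succ_right, hffn, hcard0]
      simp

/-- Pseudoindependence for profiles with disjoint supports: for a partial schedule `T` and
profiles `ν, ξ` with disjoint supports and `|T| + ‖ν‖ + ‖ξ‖ ≤ k/2`,
`Σ_{A ∈ ℱ(T,ν)} Σ_{B ∈ ℱ(T,ξ)} Ẽ_T(A ∪ B) = (Σ_{A} Ẽ_T(A)) · (Σ_{B} Ẽ_T(B))`
(where `Ẽ_T(A ∪ B) = 0` whenever `A ∪ B` is not a partial schedule). -/
theorem pexp_pseudoindependence_disjoint_supports (k : ℕ) (hk : Odd k) (hkpos : 0 < k)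
    (T : Finset (Fin (3 * k) × Fin 6)) (hT : IsPartialSchedule T)
    (ν ξ : Fin 6 → ℕ)
    (hdisj : ∀ c : Fin 6, ¬ (0 < ν c ∧ 0 < ξ c))
    (hsize : (T.card : ℝ) + (pnorm ν : ℝ) + (pnorm ξ : ℝ) ≤ (k : ℝ) / 2) :
    ∑ A ∈ extFam k T ν, ∑ B ∈ extFam k T ξ, pexp k T (A ∪ B) =
      (∑ A ∈ extFam k T ν, pexp k T A) * (∑ B ∈ extFam k T ξ, pexp k T B) := by
  set a := pnorm ν with ha
  set b := pnorm ξ with hb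
  set Qν := ∏ c : Fin 6, ((ν c).factorial : ℝ) with hQνdef
  set Qξ := ∏ c : Fin 6, ((ξ c).factorial : ℝ) with hQξdef
  set Pν := ∏ j : Fin 6, ffall ((k : ℝ) / 2 - deltaS T j) (ν j) with hPνdef
  set Pξ := ∏ j : Fin 6, ffall ((k : ℝ) / 2 - deltaS T j) (ξ j) with hPξdef
  have hQν : (0:ℝ) < Qν :=
    Finset.prod_pos fun c _ => Nat.cast_pos.2 (Nat.factorial_pos _)
  have hQξ : (0:ℝ) < Qξ :=
    Finset.prod_pos fun c _ => Nat.cast_pos.2 (Nat.factorial_pos _)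
  have hk1 : (1:ℝ) ≤ k := by exact_mod_cast hkpos
  have hT0 : (0:ℝ) ≤ T.card := Nat.cast_nonneg _
  have ha0 : (0:ℝ) ≤ a := Nat.cast_nonneg _
  have hb0 : (0:ℝ) ≤ b := Nat.cast_nonneg _
  have hpa : 0 < ffall ((3 * k : ℝ) - T.card) a := by
    apply ffall_pos
    linarith
  have hpb : 0 < ffall ((3 * k : ℝ) - T.card) b := by
    apply ffall_pos
    linarith
  have hpab : 0 < ffall ((3 * k : ℝ) - T.card - a) b := by
    apply ffall_pos
    linarith
  -- constant values on the families
  have hvalA : ∀ A ∈ extFam k T ν,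
      pexp k T A = (ffall ((3 * k : ℝ) - T.card) a)⁻¹ * Pν := by
    intro A hA
    obtain ⟨hPS, -, hδ⟩ := mem_extFam.1 hA
    unfold pexp
    rw [if_pos hPS, card_of_mem_extFam hA, ← ha]
    congr 1
    exact Finset.prod_congr rfl fun j _ => by rw [hδ j]
  have hvalB : ∀ B ∈ extFam k T ξ,
      pexp k T B = (ffall ((3 * k : ℝ) - T.card) b)⁻¹ * Pξ := by
    intro B hB
    obtain ⟨hPS, -, hδ⟩ := mem_extFam.1 hB
    unfold pexp
    rw [if_pos hPS, card_of_mem_extFam hB, ← hb]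
    congr 1
    exact Finset.prod_congr rfl fun j _ => by rw [hδ j]
  set v : ℝ := (ffall ((3 * k : ℝ) - T.card) (a + b))⁻¹ *
      ∏ j : Fin 6, ffall ((k : ℝ) / 2 - deltaS T j) (ν j + ξ j) with hvdef
  -- inner sums
  have hinner : ∀ A ∈ extFam k T ν,
      ∑ B ∈ extFam k T ξ, pexp k T (A ∪ B)
        = (ffall ((3 * k : ℝ) - T.card - a) b / Qξ) * v := by
    intro A hA
    obtain ⟨hPSA, hdisjA, hδA⟩ := mem_extFam.1 hA
    have hcardA : A.card = a := card_of_mem_extFam hA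
    rw [← Finset.sum_filter_add_sum_filter_not (extFam k T ξ)
      (fun B => Disjoint (machSet B) (machSet A)) (fun B => pexp k T (A ∪ B))]
    have hzero : ∑ B ∈ (extFam k T ξ).filter
        (fun B => ¬ Disjoint (machSet B) (machSet A)), pexp k T (A ∪ B) = 0 := by
      apply Finset.sum_eq_zero
      intro B hB
      obtain ⟨hBmem, hnd⟩ := Finset.mem_filter.1 hB
      obtain ⟨hPSB, -, hδB⟩ := mem_extFam.1 hBmem
      obtain ⟨i, hiB, hiA⟩ := Finset.not_disjoint_iff.1 hnd
      obtain ⟨c₂, hc₂⟩ := mem_machSet.1 hiB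
      obtain ⟨c₁, hc₁⟩ := mem_machSet.1 hiA
      have hν : 0 < ν c₁ := by
        rw [← hδA c₁]
        exact Finset.card_pos.2 ⟨(i, c₁), Finset.mem_filter.2 ⟨hc₁, rfl⟩⟩
      have hξ : 0 < ξ c₂ := by
        rw [← hδB c₂]
        exact Finset.card_pos.2 ⟨(i, c₂), Finset.mem_filter.2 ⟨hc₂, rfl⟩⟩
      have hcne : c₁ ≠ c₂ := fun h => hdisj c₁ ⟨hν, h ▸ hξ⟩
      have hnPS : ¬ IsPartialSchedule (A ∪ B) := fun hPS =>
        hcne (congrArg Prod.snd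
          (hPS (i, c₁) (Finset.mem_union_left _ hc₁) (i, c₂)
            (Finset.mem_union_right _ hc₂) rfl))
      unfold pexp
      rw [if_neg hnPS]
    have hval : ∀ B ∈ (extFam k T ξ).filter
        (fun B => Disjoint (machSet B) (machSet A)), pexp k T (A ∪ B) = v := by
      intro B hB
      obtain ⟨hBmem, hd⟩ := Finset.mem_filter.1 hB
      obtain ⟨hPSB, hdisjB, hδB⟩ := mem_extFam.1 hBmem
      have hABdisj : Disjoint A B := Finset.disjoint_left.2 fun p hpA hpB =>
        hd.forall_ne_finset (fst_mem_machSet hpB) (fst_mem_machSet hpA) rfl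
      have hPSU : IsPartialSchedule (A ∪ B) := isPS_union hPSA hPSB hd.symm
      unfold pexp
      rw [if_pos hPSU, Finset.card_union_of_disjoint hABdisj, hcardA,
        card_of_mem_extFam hBmem, ← hb, hvdef]
      congr 1
      apply Finset.prod_congr rfl
      intro j _
      rw [deltaS_union hABdisj, hδA j, hδB j]
    rw [Finset.sum_congr rfl hval, hzero, add_zero, Finset.sum_const, nsmul_eq_mul]
    have hfeq : (extFam k T ξ).filter (fun B => Disjoint (machSet B) (machSet A))
        = extFam k (T ∪ A) ξ := by
      ext B
      simp only [Finset.mem_filter, mem_extFam]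
      have hms : machSet (T ∪ A) = machSet T ∪ machSet A := Finset.image_union _ _
      rw [hms, Finset.disjoint_union_right]
      tauto
    rw [hfeq]
    have hPSTA : IsPartialSchedule (T ∪ A) := isPS_union hT hPSA hdisjA.symm
    have hTA : Disjoint T A := Finset.disjoint_left.2 fun p hpT hpA =>
      hdisjA.forall_ne_finset (fst_mem_machSet hpA) (fst_mem_machSet hpT) rfl
    have hcardTA : (T ∪ A).card = T.card + a := by
      rw [Finset.card_union_of_disjoint hTA, hcardA]
    have hE := extFam_card k b ξ hb.symm (T ∪ A) hPSTA
    rw [hcardTA] at hE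
    have harg : ((3 * k : ℝ) - ((T.card + a : ℕ) : ℝ)) = (3 * k : ℝ) - T.card - a := by
      push_cast; ring
    rw [harg] at hE
    have hcardeq : ((extFam k (T ∪ A) ξ).card : ℝ)
        = ffall ((3 * k : ℝ) - T.card - a) b / Qξ := by
      rw [eq_div_iff hQξ.ne']
      exact hE
    rw [hcardeq]
  rw [Finset.sum_congr rfl hinner, Finset.sum_congr rfl hvalA,
    Finset.sum_congr rfl hvalB, Finset.sum_const, Finset.sum_const, Finset.sum_const,
    nsmul_eq_mul, nsmul_eq_mul, nsmul_eq_mul]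
  have eν := extFam_card k a ν ha.symm T hT
  have eξ := extFam_card k b ξ hb.symm T hT
  have hcardν : ((extFam k T ν).card : ℝ) = ffall ((3 * k : ℝ) - T.card) a / Qν := by
    rw [eq_div_iff hQν.ne']
    exact eν
  have hcardξ : ((extFam k T ξ).card : ℝ) = ffall ((3 * k : ℝ) - T.card) b / Qξ := by
    rw [eq_div_iff hQξ.ne']
    exact eξ
  have hP : (∏ j : Fin 6, ffall ((k : ℝ) / 2 - deltaS T j) (ν j + ξ j)) = Pν * Pξ := by
    rw [hPνdef, hPξdef, ← Finset.prod_mul_distrib]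
    apply Finset.prod_congr rfl
    intro j _
    rcases Nat.eq_zero_or_pos (ν j) with h | h
    · simp [h, ffall]
    · have hξ0 : ξ j = 0 := by
        by_contra h'
        exact hdisj j ⟨h, Nat.pos_of_ne_zero h'⟩
      simp [hξ0, ffall]
  have hfadd : ffall ((3 * k : ℝ) - T.card) (a + b)
      = ffall ((3 * k : ℝ) - T.card) a * ffall ((3 * k : ℝ) - T.card - a) b :=
    ffall_add _ a b
  rw [hvdef, hP, hfadd, hcardν, hcardξ]
  field_simp
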